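/- Let R be a commutative ℚ-algebra, A an associative unital R-algebra, C a maximal commutative R-subalgebra of A, and M an A-bimodule symmetric over R. If m ∈ F^C_p M and c_1, …, c_i ∈ C with i ≤ p, then ad_{c_1}(ad_{c_2}(⋯ ad_{c_i}(m)⋯)) ∈ F^C_{p−i} M; i.e., each application of an operator ad_c with c ∈ C lowers the filtration degree by at least one. -/

import Mathlib

/- STATEMENT 8: Over a commutative `ℚ`-algebra `R`, with `C` maximal commutative in `A`
and `M` an `A`-bimodule symmetric over `R`: if `m ∈ F^C_p M` and `c_1, …, c_i ∈ C` with
`i ≤ p`, then `ad_{c_1}(⋯ ad_{c_i}(m)⋯) ∈ F^C_{p−i} M`. -/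

variable {R A M : Type*} [CommRing R] [Algebra ℚ R] [Ring A] [Algebra R A]
  [AddCommGroup M] [Module A M] [Module Aᵐᵒᵖ M] [SMulCommClass A Aᵐᵒᵖ M]
  [Module R M] [IsScalarTower R A M] [IsScalarTower R Aᵐᵒᵖ M]

/-- `ad_a(m) = a·m − m·a` on the bimodule `M`. -/
def adM (a : A) (m : M) : M := a • m - MulOpposite.op a • m

/-- Iterated adjoint `ad_{c_0}(ad_{c_1}(⋯ ad_{c_k}(m)⋯))` for a list `[c_0, …, c_k]`. -/
def adIter : List A → M → M
  | [], m => m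
  | a :: l, m => adM a (adIter l m)

/-- The filtration `F^C_p M` on the bimodule `M`. -/
def FM (C : Subalgebra R A) (p : ℕ) : Set M :=
  {m | ∀ c ∈ C, (adM c)^[p + 1] m = 0}

set_option linter.unusedSectionVars false
set_option linter.unusedVariables false

def adEnd (a : A) : Module.End R M where
  toFun := adM a
  map_add' x y := by simp [adM, smul_add]; abel
  map_smul' r x := by
    simp only [adM, RingHom.id_apply, smul_sub]
    rw [← smul_comm r a x, ← smul_comm r (MulOpposite.op a) x]

lemma adEnd_apply (a : A) (m : M) : adEnd (R := R) a m = adM a m := rfl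

lemma adEnd_add (a b : A) : adEnd (R := R) (M := M) (a + b) = adEnd a + adEnd b := by
  ext m
  simp [adEnd, adM, add_smul]
  abel

lemma adEnd_zero : adEnd (R := R) (M := M) (0 : A) = 0 := by
  ext m; simp [adEnd, adM]

def adHom : A →+ Module.End R M where
  toFun := adEnd
  map_zero' := adEnd_zero
  map_add' := adEnd_add

lemma adEnd_nsmul (n : ℕ) (a : A) :
    adEnd (R := R) (M := M) (n • a) = n • adEnd a :=
  map_nsmul (adHom (R := R) (M := M) (A := A)) n a

lemma adEnd_comm {a b : A} (h : a * b = b * a) :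
    Commute (adEnd (R := R) (M := M) a) (adEnd b) := by
  ext m
  simp only [Module.End.mul_apply, adEnd_apply, adM, smul_sub]
  rw [smul_smul, smul_smul, smul_smul, smul_smul, ← MulOpposite.op_mul, ← MulOpposite.op_mul,
    smul_comm a (MulOpposite.op b) m, smul_comm b (MulOpposite.op a) m, h]
  abel

lemma vandermonde_smul_eq_zero {K W : Type*} [Field K] [AddCommGroup W] [Module K W]
    {N : ℕ} (x : Fin N → K) (hx : Function.Injective x) (v : Fin N → W)
    (h : ∀ t, ∑ j : Fin N, x t ^ (j : ℕ) • v j = 0) : ∀ j, v j = 0 := by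
  classical
  set V := Matrix.vandermonde x with hV
  have hdet : V.det ≠ 0 := by
    rw [hV, Matrix.det_vandermonde]
    refine Finset.prod_ne_zero_iff.mpr fun i _ => Finset.prod_ne_zero_iff.mpr fun j hj => ?_
    rw [Finset.mem_Ioi] at hj
    exact sub_ne_zero.mpr fun e => (ne_of_lt hj).symm (hx e)
  have hinv : V⁻¹ * V = 1 := Matrix.nonsing_inv_mul V (isUnit_iff_ne_zero.mpr hdet)
  intro i
  have h1 : v i = ∑ l, (V⁻¹ * V) i l • v l := by
    rw [hinv]
    simp [Matrix.one_apply]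
  rw [h1]
  calc ∑ l, (V⁻¹ * V) i l • v l
      = ∑ l, ∑ j, (V⁻¹ i j * V j l) • v l := by
        simp [Matrix.mul_apply, Finset.sum_smul]
    _ = ∑ j, V⁻¹ i j • ∑ l, V j l • v l := by
        rw [Finset.sum_comm]
        simp [Finset.smul_sum, mul_smul]
    _ = 0 := by
        refine Finset.sum_eq_zero fun j _ => ?_
        have := h j
        simp only [hV, Matrix.vandermonde_apply] at *
        rw [this, smul_zero]

lemma adM_step (C : Subalgebra R A) (k : ℕ) (m : M)
    (hm : ∀ e ∈ C, ((adEnd (R := R) (M := M) e) ^ (k + 1)) m = 0)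
    {c : A} (hc : c ∈ C) {d : A} (hd : d ∈ C) (hcd : d * c = c * d) :
    ((adEnd (R := R) (M := M) d) ^ k) (adEnd (R := R) c m) = 0 := by
  letI : Module ℚ M := Module.compHom M (algebraMap ℚ R)
  have qsmul_nat : ∀ (n : ℕ) (w : M), ((n : ℚ) • w) = n • w := by
    intro n w
    show algebraMap ℚ R (n : ℚ) • w = n • w
    rw [map_natCast, Nat.cast_smul_eq_nsmul]
  set S := adEnd (R := R) (M := M) c with hS
  set T := adEnd (R := R) (M := M) d with hT
  have hcomm : Commute T S := adEnd_comm hcd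
  set u : ℕ → M := fun i => (k+1).choose i • ((T ^ i) ((S ^ (k+1-i)) m)) with hu
  have expand : ∀ n : ℕ, ∑ i ∈ Finset.range (k+2), n ^ (k+1-i) • u i = 0 := by
    intro n
    have he : d + n • c ∈ C := add_mem hd (nsmul_mem hc n)
    have h0 := hm _ he
    rw [adEnd_add, adEnd_nsmul, ← hS, ← hT, Commute.add_pow (hcomm.smul_right n)] at h0
    rw [← h0, LinearMap.sum_apply]
    refine Finset.sum_congr rfl fun i _ => ?_
    simp only [hu, smul_pow, Module.End.mul_apply, LinearMap.smul_apply,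
      Module.End.natCast_apply, map_nsmul]
    rw [smul_comm]
  have reflected : ∀ n : ℕ, ∑ j ∈ Finset.range (k+2), n ^ j • u (k+1-j) = 0 := by
    intro n
    rw [← Finset.sum_range_reflect]
    rw [← expand n]
    refine Finset.sum_congr rfl fun j hj => ?_
    rw [Finset.mem_range] at hj
    have h1 : k + 2 - 1 - j = k + 1 - j := by omega
    have h2 : k + 1 - (k + 1 - j) = j := by omega
    rw [h1, h2]
  have hv : ∀ j : Fin (k+2), u (k+1-(j:ℕ)) = 0 := by
    refine vandermonde_smul_eq_zero (K := ℚ) (fun t : Fin (k+2) => ((t : ℕ) : ℚ))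
      (fun a b hab => Fin.ext (Nat.cast_injective hab)) _ (fun t => ?_)
    have := reflected ((t : ℕ))
    rw [← Fin.sum_univ_eq_sum_range] at this
    rw [← this]
    refine Finset.sum_congr rfl fun j _ => ?_
    rw [← Nat.cast_pow, qsmul_nat]
  have h1 : u k = 0 := by
    have := hv ⟨1, by omega⟩
    simpa using this
  rw [hu] at h1
  simp only [Nat.add_sub_cancel_left, Nat.succ_sub_one] at h1
  have h2 : (k+1) • ((T ^ k) (S m)) = 0 := by
    rw [pow_one, Nat.choose_succ_self_right] at h1
    exact h1
  have h3 : ((k+1 : ℕ) : ℚ) • ((T ^ k) (S m)) = 0 := by rw [qsmul_nat]; exact h2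
  have h5 : (T ^ k) (S m) = (((k+1:ℕ):ℚ))⁻¹ • (((k+1:ℕ):ℚ) • ((T ^ k) (S m))) := by
    rw [smul_smul, inv_mul_cancel₀ (show ((k+1:ℕ):ℚ) ≠ 0 by positivity), one_smul]
  rw [h5, h3, smul_zero]

lemma adEnd_pow_apply (c : A) (n : ℕ) (m : M) :
    ((adEnd (R := R) c) ^ n) m = (adM c)^[n] m := Module.End.pow_apply _ _ _

lemma adIter_mem (C : Subalgebra R A) (hC : ∀ x ∈ C, ∀ y ∈ C, x * y = y * x) :
    ∀ (l : List A) (p : ℕ), (∀ a ∈ l, a ∈ C) → l.length ≤ p →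
      ∀ m : M, m ∈ FM C p → adIter l m ∈ FM (M := M) C (p - l.length) := by
  intro l
  induction l with
  | nil => intro p _ _ m hm; simpa [adIter] using hm
  | cons a l ih =>
    intro p hmem hlen m hm
    have hlen' : l.length ≤ p := by simp [List.length_cons] at hlen; omega
    have hx := ih p (fun b hb => hmem b (List.mem_cons_of_mem _ hb)) hlen' m hm
    have ha : a ∈ C := hmem a (List.mem_cons_self)
    set q := p - l.length with hq
    have hq1 : 1 ≤ q := by simp [List.length_cons] at hlen; omega
    have goal_eq : p - (a :: l).length = q - 1 := by
      simp only [List.length_cons, hq]; omega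
    rw [goal_eq]
    intro e he
    show (adM e)^[(q - 1) + 1] (adM a (adIter l m)) = 0
    rw [← adEnd_pow_apply (R := R)]
    have hq2 : q - 1 + 1 = q := by omega
    rw [hq2]
    have hm' : ∀ e' ∈ C, ((adEnd (R := R) (M := M) e') ^ (q + 1)) (adIter l m) = 0 := by
      intro e' he'
      rw [adEnd_pow_apply]
      exact hx e' he'
    exact adM_step C q (adIter l m) hm' ha he (hC e he a ha)

theorem adIter_lowers_filtration (C : Subalgebra R A)
    (hC : ∀ x ∈ C, ∀ y ∈ C, x * y = y * x)
    (hmax : ∀ a : A, (∀ c ∈ C, c * a = a * c) → a ∈ C)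
    (p i : ℕ) (hip : i ≤ p)
    (m : M) (hm : m ∈ FM (M := M) C p)
    (c : Fin i → A) (hc : ∀ j, c j ∈ C) :
    adIter (List.ofFn c) m ∈ FM (M := M) C (p - i) := by
  have hlen : (List.ofFn c).length = i := List.length_ofFn
  have := adIter_mem C hC (List.ofFn c) p
    (fun a haa => by
      obtain ⟨j, rfl⟩ := List.mem_ofFn.mp haa
      exact hc j)
    (by rw [hlen]; exact hip) m hm
  rwa [hlen] at this
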